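/- There exists a constant D > 2, depending only on d, r₀, the minimum of p on [0, r₀] and the Lipschitz constant of p, such that for all 0 < δ ≤ r₀/2 and all 0 < ε ≤ δ/2 one has m(Ω_{δ+ε,B}) ≤ (1 + Dε/δ)·m(Ω_{δ,B}) and m(Ω_{δ−ε,B}) ≥ (1 − Dε/δ)·m(Ω_{δ,B}). -/

import Mathlib

open MeasureTheory Set Pointwise

/-- Upper Bernoulli-type bound: `(1+t)^d ≤ 1 + (max d 1 * exp d) * t` for `0 ≤ t ≤ 1`. -/
lemma rpow_one_add_le_aux {d t : ℝ} (hd : 0 < d) (ht : 0 ≤ t) (ht1 : t ≤ 1) :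
    (1 + t) ^ d ≤ 1 + (max d 1 * Real.exp d) * t := by
  have h1t : (0:ℝ) < 1 + t := by linarith
  have hlog : Real.log (1 + t) ≤ t := by
    have := Real.log_le_sub_one_of_pos h1t
    linarith
  have h1 : (1 + t) ^ d = Real.exp (d * Real.log (1 + t)) := by
    rw [Real.rpow_def_of_pos h1t d, mul_comm]
  have h2 : Real.exp (d * Real.log (1 + t)) ≤ Real.exp (d * t) :=
    Real.exp_le_exp.mpr (by nlinarith)
  have h3 : Real.exp (d * t) ≤ 1 + (d * t) * Real.exp (d * t) := by
    have := Real.add_one_le_exp (-(d * t))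
    have hpos := Real.exp_pos (d * t)
    have hprod : Real.exp (d * t) * Real.exp (-(d * t)) = 1 := by
      rw [← Real.exp_add]; simp
    nlinarith [mul_le_mul_of_nonneg_left this hpos.le]
  have h4 : Real.exp (d * t) ≤ Real.exp d :=
    Real.exp_le_exp.mpr (by nlinarith)
  have h5 : d ≤ max d 1 := le_max_left d 1
  have hexp1 : (1:ℝ) ≤ Real.exp d := by
    have := Real.add_one_le_exp d; linarith
  rw [h1]
  calc Real.exp (d * Real.log (1 + t)) ≤ Real.exp (d * t) := h2
    _ ≤ 1 + (d * t) * Real.exp (d * t) := h3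
    _ ≤ 1 + (max d 1 * Real.exp d) * t := by
        have e1 : d * t * Real.exp (d * t) ≤ d * t * Real.exp d :=
          mul_le_mul_of_nonneg_left h4 (by positivity)
        have e2 : d * t * Real.exp d ≤ max d 1 * Real.exp d * t := by
          have := mul_le_mul_of_nonneg_right h5 (mul_nonneg ht (Real.exp_pos d).le)
          nlinarith
        linarith

/-- Lower Bernoulli-type bound: `1 - (max d 1 * exp d) * t ≤ (1-t)^d` for `0 ≤ t ≤ 1/2`. -/
lemma one_sub_le_rpow_aux {d t : ℝ} (hd : 0 < d) (ht : 0 ≤ t) (ht1 : t ≤ 1/2) :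
    1 - (max d 1 * Real.exp d) * t ≤ (1 - t) ^ d := by
  have hexp1 : (1:ℝ) ≤ Real.exp d := by
    have := Real.add_one_le_exp d; linarith
  rcases le_or_gt 1 d with hd1 | hd1
  · have := one_add_mul_self_le_rpow_one_add (s := -t) (by linarith) hd1
    have hA : d ≤ max d 1 * Real.exp d := by
      have := le_max_left d 1; nlinarith
    have : 1 + d * (-t) ≤ (1 + -t) ^ d := this
    have heq : (1 + -t : ℝ) = 1 - t := by ring
    rw [heq] at this
    nlinarith
  · have h1t : (0:ℝ) < 1 - t := by linarith
    have h1t1 : (1:ℝ) - t ≤ 1 := by linarith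
    have : (1 - t) ^ (1:ℝ) ≤ (1 - t) ^ d :=
      Real.rpow_le_rpow_of_exponent_ge h1t h1t1 (le_of_lt hd1)
    rw [Real.rpow_one] at this
    have hA : (1:ℝ) ≤ max d 1 * Real.exp d := by
      have := le_max_right d 1; nlinarith
    nlinarith

set_option maxHeartbeats 1000000 in
/-- Regularity of the volume of the variable domains
`Ω_{δ,B} = O_δ × B`:  there is a constant `D > 2` (depending only on the fixed data
`d`, `r₀`, the minimum of `p` and the Lipschitz constant of `p`, but not on `B`)
such that for all `0 < δ ≤ r₀/2` and `0 < ε ≤ δ/2`,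
`m(Ω_{δ+ε,B}) ≤ (1 + Dε/δ)·m(Ω_{δ,B})` and `m(Ω_{δ-ε,B}) ≥ (1 - Dε/δ)·m(Ω_{δ,B})`. -/
theorem stmt0
    {Ginf Gf : Type*}
    [Group Ginf] [TopologicalSpace Ginf] [IsTopologicalGroup Ginf]
    [LocallyCompactSpace Ginf] [SecondCountableTopology Ginf]
    [MeasurableSpace Ginf] [BorelSpace Ginf]
    [Group Gf] [TopologicalSpace Gf] [IsTopologicalGroup Gf]
    [LocallyCompactSpace Gf] [SecondCountableTopology Gf]
    [TotallyDisconnectedSpace Gf]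
    [MeasurableSpace Gf] [BorelSpace Gf]
    (minf : Measure Ginf) [Measure.IsHaarMeasure minf]
    (mf : Measure Gf) [Measure.IsHaarMeasure mf]
    (hunimod : (minf.prod mf).IsMulRightInvariant)
    (r₀ : ℝ) (hr₀ : 0 < r₀) (d : ℝ) (hd : 0 < d)
    (p : ℝ → ℝ) (L : NNReal) (hp : LipschitzOnWith L p (Icc 0 r₀))
    (hppos : ∀ r ∈ Icc (0:ℝ) r₀, 0 < p r)
    (O : ℝ → Set Ginf)
    (hOmeas : ∀ r ∈ Ioc (0:ℝ) r₀, MeasurableSet (O r))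
    (hOsymm : ∀ r ∈ Ioc (0:ℝ) r₀, (O r)⁻¹ = O r)
    (hObdd : ∀ r ∈ Ioc (0:ℝ) r₀, IsCompact (closure (O r)))
    (hOnhd : ∀ r ∈ Ioc (0:ℝ) r₀, O r ∈ nhds (1 : Ginf))
    (hOprod : ∀ r r' : ℝ, 0 < r → 0 < r' → r + r' ≤ r₀ → O r * O r' = O (r + r'))
    (hOvol : ∀ r ∈ Ioc (0:ℝ) r₀, minf (O r) = ENNReal.ofReal (r ^ d * p r)) :
    ∃ D : ℝ, 2 < D ∧
      ∀ B : Set Gf, MeasurableSet B → 0 < mf B → mf B < ⊤ →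
        ∀ δ ε : ℝ, 0 < δ → δ ≤ r₀ / 2 → 0 < ε → ε ≤ δ / 2 →
          (minf.prod mf) ((O (δ + ε)) ×ˢ B)
              ≤ ENNReal.ofReal (1 + D * ε / δ) * (minf.prod mf) ((O δ) ×ˢ B) ∧
          ENNReal.ofReal (1 - D * ε / δ) * (minf.prod mf) ((O δ) ×ˢ B)
              ≤ (minf.prod mf) ((O (δ - ε)) ×ˢ B) := by
  -- the minimum of p on [0, r₀]
  obtain ⟨x₀, hx₀, hmin⟩ :=
    isCompact_Icc.exists_isMinOn (s := Icc (0:ℝ) r₀)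
      (nonempty_Icc.mpr hr₀.le) hp.continuousOn
  set pmin := p x₀ with hpmin
  have hpminpos : 0 < pmin := hppos x₀ hx₀
  set A := max d 1 * Real.exp d with hA
  have hA1 : (1:ℝ) ≤ A := by
    have := le_max_right d 1
    have hexp1 : (1:ℝ) ≤ Real.exp d := by
      have := Real.add_one_le_exp d; linarith
    nlinarith
  set Bc := (L : ℝ) * r₀ / pmin with hBc
  have hBc0 : 0 ≤ Bc := by positivity
  refine ⟨A + Bc + A * Bc + 3, by nlinarith, ?_⟩
  intro B hB hB0 hBtop δ ε hδ hδr hε hεδ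
  set D := A + Bc + A * Bc + 3 with hD
  -- membership facts
  have hδr₀ : δ ∈ Ioc (0:ℝ) r₀ := ⟨hδ, by linarith⟩
  have hδε : δ + ε ∈ Ioc (0:ℝ) r₀ := ⟨by linarith, by linarith⟩
  have hδε' : δ - ε ∈ Ioc (0:ℝ) r₀ := ⟨by linarith, by linarith⟩
  have hIcc : ∀ {r : ℝ}, r ∈ Ioc (0:ℝ) r₀ → r ∈ Icc (0:ℝ) r₀ :=
    fun h => ⟨h.1.le, h.2⟩
  -- Lipschitz estimates
  have hlip1 : |p (δ + ε) - p δ| ≤ (L : ℝ) * ε := by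
    have := hp.dist_le_mul (δ + ε) (hIcc hδε) δ (hIcc hδr₀)
    rwa [Real.dist_eq, Real.dist_eq, abs_of_pos (by linarith : (0:ℝ) < δ + ε - δ),
      (by ring : δ + ε - δ = ε)] at this
  have hlip2 : |p (δ - ε) - p δ| ≤ (L : ℝ) * ε := by
    have := hp.dist_le_mul (δ - ε) (hIcc hδε') δ (hIcc hδr₀)
    rwa [Real.dist_eq, Real.dist_eq, abs_of_nonpos (by linarith : δ - ε - δ ≤ 0),
      (by ring : -(δ - ε - δ) = ε)] at this
  have hpδ : 0 < p δ := hppos δ (hIcc hδr₀)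
  have hpδε : 0 < p (δ + ε) := hppos _ (hIcc hδε)
  have hpδε' : 0 < p (δ - ε) := hppos _ (hIcc hδε')
  have hpminδ : pmin ≤ p δ := hmin (hIcc hδr₀)
  -- set t := ε / δ
  set t := ε / δ with htdef
  have ht0 : 0 < t := div_pos hε hδ
  have ht12 : t ≤ 1/2 := by
    rw [div_le_iff₀ hδ]; linarith
  have hεt : ε = t * δ := by
    rw [htdef, div_mul_cancel₀ ε hδ.ne']
  -- rpow bounds
  have hup : (1 + t) ^ d ≤ 1 + A * t := rpow_one_add_le_aux hd ht0.le (by linarith)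
  have hlo : 1 - A * t ≤ (1 - t) ^ d := one_sub_le_rpow_aux hd ht0.le ht12
  -- δ^d positive
  have hδd : (0:ℝ) < δ ^ d := Real.rpow_pos_of_pos hδ d
  -- p bounds in multiplicative form
  have hpup : p (δ + ε) ≤ p δ * (1 + Bc * t) := by
    have h1 : p (δ + ε) ≤ p δ + (L:ℝ) * ε := by
      have := abs_le.mp hlip1; linarith [this.2]
    have h2 : (L:ℝ) * ε ≤ p δ * (Bc * t) := by
      have hε' : ε ≤ t * r₀ := by
        rw [hεt]; nlinarith
      have h5 : pmin * (Bc * t) = (L:ℝ) * r₀ * t := by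
        rw [hBc]
        field_simp
      linarith [mul_le_mul_of_nonneg_left hε' (NNReal.coe_nonneg L),
        mul_le_mul_of_nonneg_right hpminδ (mul_nonneg hBc0 ht0.le), h5]
    linarith
  have hplo : p δ * (1 - Bc * t) ≤ p (δ - ε) := by
    have h1 : p δ - (L:ℝ) * ε ≤ p (δ - ε) := by
      have := abs_le.mp hlip2; linarith [this.1]
    have h2 : (L:ℝ) * ε ≤ p δ * (Bc * t) := by
      have hε' : ε ≤ t * r₀ := by
        rw [hεt]; nlinarith
      have h5 : pmin * (Bc * t) = (L:ℝ) * r₀ * t := by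
        rw [hBc]
        field_simp
      linarith [mul_le_mul_of_nonneg_left hε' (NNReal.coe_nonneg L),
        mul_le_mul_of_nonneg_right hpminδ (mul_nonneg hBc0 ht0.le), h5]
    nlinarith
  -- measure computations
  have hprodv : ∀ r ∈ Ioc (0:ℝ) r₀,
      (minf.prod mf) ((O r) ×ˢ B) = ENNReal.ofReal (r ^ d * p r) * mf B := by
    intro r hr
    rw [Measure.prod_prod, hOvol r hr]
  constructor
  · rw [hprodv _ hδε, hprodv _ hδr₀, ← mul_assoc,
      ← ENNReal.ofReal_mul (by positivity)]
    apply mul_le_mul_left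
    apply ENNReal.ofReal_le_ofReal
    -- (δ+ε)^d * p(δ+ε) ≤ (1 + D t) * (δ^d * p δ)
    have hsplit : (δ + ε) ^ d = δ ^ d * (1 + t) ^ d := by
      rw [← Real.mul_rpow hδ.le (by linarith : (0:ℝ) ≤ 1 + t)]
      congr 1
      rw [htdef]
      field_simp
    rw [hsplit]
    have hDt : D * ε / δ = D * t := by rw [htdef]; ring
    rw [hDt]
    have key : (1 + t) ^ d * p (δ + ε) ≤ (1 + D * t) * p δ := by
      have hA0 : (0:ℝ) ≤ A := by linarith
      have h1 : (1 + t) ^ d * p (δ + ε) ≤ (1 + A * t) * (p δ * (1 + Bc * t)) := by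
        apply mul_le_mul hup hpup hpδε.le
          (by nlinarith [mul_nonneg hA0 ht0.le])
      have htt : t * t ≤ t := by nlinarith
      have hs : (1 + A * t) * (1 + Bc * t) ≤ 1 + D * t := by
        rw [hD]
        have hABtt : A * Bc * (t * t) ≤ A * Bc * t :=
          mul_le_mul_of_nonneg_left htt (mul_nonneg hA0 hBc0)
        nlinarith [ht0.le]
      have h2 : (1 + A * t) * (p δ * (1 + Bc * t)) ≤ (1 + D * t) * p δ := by
        calc (1 + A * t) * (p δ * (1 + Bc * t))
            = ((1 + A * t) * (1 + Bc * t)) * p δ := by ring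
          _ ≤ (1 + D * t) * p δ := mul_le_mul_of_nonneg_right hs hpδ.le
      linarith
    calc δ ^ d * (1 + t) ^ d * p (δ + ε)
        = δ ^ d * ((1 + t) ^ d * p (δ + ε)) := by ring
      _ ≤ δ ^ d * ((1 + D * t) * p δ) := mul_le_mul_of_nonneg_left key hδd.le
      _ = (1 + D * t) * (δ ^ d * p δ) := by ring
  · rw [hprodv _ hδε', hprodv _ hδr₀, ← mul_assoc,
      ← ENNReal.ofReal_mul' (mul_nonneg hδd.le hpδ.le)]
    apply mul_le_mul_left
    apply ENNReal.ofReal_le_ofReal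
    have hsplit : (δ - ε) ^ d = δ ^ d * (1 - t) ^ d := by
      rw [← Real.mul_rpow hδ.le (by linarith : (0:ℝ) ≤ 1 - t)]
      congr 1
      rw [htdef]
      field_simp
    rw [hsplit]
    have hDt : D * ε / δ = D * t := by rw [htdef]; ring
    rw [hDt]
    have hrp : (0:ℝ) < (1 - t) ^ d := Real.rpow_pos_of_pos (by linarith) d
    have hA0 : (0:ℝ) ≤ A := by linarith
    rcases le_or_gt (1 - D * t) 0 with hneg | hposD
    · have hL : (1 - D * t) * (δ ^ d * p δ) ≤ 0 :=
        mul_nonpos_of_nonpos_of_nonneg hneg (mul_nonneg hδd.le hpδ.le)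
      have hR : (0:ℝ) ≤ δ ^ d * (1 - t) ^ d * p (δ - ε) := by
        have := mul_nonneg (mul_nonneg hδd.le hrp.le) hpδε'.le
        linarith
      linarith
    · have hADt : A * t ≤ D * t := by
        rw [hD]
        nlinarith [mul_nonneg hBc0 ht0.le, mul_nonneg (mul_nonneg hA0 hBc0) ht0.le]
      have hBDt : Bc * t ≤ D * t := by
        rw [hD]
        nlinarith [mul_nonneg hA0 ht0.le, mul_nonneg (mul_nonneg hA0 hBc0) ht0.le]
      have h1At : 0 < 1 - A * t := by linarith
      have h1Bt : 0 < 1 - Bc * t := by linarith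
      have key : (1 - D * t) * p δ ≤ (1 - t) ^ d * p (δ - ε) := by
        have h1 : (1 - A * t) * (p δ * (1 - Bc * t)) ≤ (1 - t) ^ d * p (δ - ε) :=
          mul_le_mul hlo hplo (mul_nonneg hpδ.le h1Bt.le) hrp.le
        have hs : 1 - D * t ≤ (1 - A * t) * (1 - Bc * t) := by
          rw [hD]
          nlinarith [mul_nonneg (mul_nonneg (mul_nonneg hA0 hBc0) ht0.le) ht0.le,
            mul_nonneg (mul_nonneg hA0 hBc0) ht0.le, ht0.le]
        have h2 : (1 - D * t) * p δ ≤ (1 - A * t) * (p δ * (1 - Bc * t)) := by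
          calc (1 - D * t) * p δ ≤ ((1 - A * t) * (1 - Bc * t)) * p δ :=
                mul_le_mul_of_nonneg_right hs hpδ.le
            _ = (1 - A * t) * (p δ * (1 - Bc * t)) := by ring
        linarith
      calc (1 - D * t) * (δ ^ d * p δ)
          = δ ^ d * ((1 - D * t) * p δ) := by ring
        _ ≤ δ ^ d * ((1 - t) ^ d * p (δ - ε)) := mul_le_mul_of_nonneg_left key hδd.le
        _ = δ ^ d * (1 - t) ^ d * p (δ - ε) := by ring
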